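/- Let A(x) ∈ M_r(ℂ[x]) and c ∈ ℂ with det D(A(x); c) ≠ 0. If g(x) ∈ G_r satisfies g(x)⁻¹A(x)g(x) = A(x), then g(x) = I_r. (That is, the action of G_r on { A(x) : det D(A(x); c) ≠ 0 } is free.) -/
import Mathlib


open Polynomial Matrix

noncomputable section

/-- The space `M(r,d)` of polynomial matrices, with `r = n+2`. -/
def Mrd (n d : ℕ) (A : Matrix (Fin (n+2)) (Fin (n+2)) (Polynomial ℂ)) : Prop :=
  (A 0 0).degree ≤ (d : WithBot ℕ) ∧
  (∀ j : Fin (n+1), (A 0 j.succ).degree ≤ ((d+1 : ℕ) : WithBot ℕ)) ∧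
  (∀ i : Fin (n+1), (A i.succ 0).degree ≤ ((d-1 : ℕ) : WithBot ℕ)) ∧
  (∀ i j : Fin (n+1), (A i.succ j.succ).degree ≤ (d : WithBot ℕ))

/-- The group `G_r`, `r = n+2`: block form `[[1, ᵗb₁x + ᵗb₀],[0, B]]` with `B ∈ GL_{r-1}(ℂ)`. -/
def Gr (n : ℕ) (g : Matrix (Fin (n+2)) (Fin (n+2)) (Polynomial ℂ)) : Prop :=
  g 0 0 = 1 ∧
  (∀ i : Fin (n+1), g i.succ 0 = 0) ∧
  (∀ j : Fin (n+1), (g 0 j.succ).degree ≤ 1) ∧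
  (∀ i j : Fin (n+1), (g i.succ j.succ).degree ≤ 0) ∧
  IsUnit g.det

/-- The block `u(x)` of `A(x)`. -/
def blkU (n : ℕ) (A : Matrix (Fin (n+2)) (Fin (n+2)) (Polynomial ℂ)) :
    Fin (n+1) → Polynomial ℂ := fun i => A i.succ 0

/-- The block `T(x)` of `A(x)`. -/
def blkT (n : ℕ) (A : Matrix (Fin (n+2)) (Fin (n+2)) (Polynomial ℂ)) :
    Matrix (Fin (n+1)) (Fin (n+1)) (Polynomial ℂ) := Matrix.of fun i j => A i.succ j.succ

/-- `D(A(x); x) = (u(x), T(x)u(x), …, T(x)^{r−2}u(x))`. -/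
def Dmat (n : ℕ) (A : Matrix (Fin (n+2)) (Fin (n+2)) (Polynomial ℂ)) :
    Matrix (Fin (n+1)) (Fin (n+1)) (Polynomial ℂ) :=
  Matrix.of fun i j => ((blkT n A ^ (j : ℕ)) *ᵥ blkU n A) i

/-- `D(A(x); c)`, evaluation at `x = c`. -/
def Dc (n : ℕ) (A : Matrix (Fin (n+2)) (Fin (n+2)) (Polynomial ℂ)) (c : ℂ) :
    Matrix (Fin (n+1)) (Fin (n+1)) ℂ :=
  (Dmat n A).map (eval c)

/-- The lower shift matrix `τ`. -/
def tauMat (n : ℕ) : Matrix (Fin (n+1)) (Fin (n+1)) ℂ :=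
  Matrix.of fun i j => if (i : ℕ) = (j : ℕ) + 1 then 1 else 0

/-- The vector `ν = ᵗ(1,0,…,0)`. -/
def nuVec (n : ℕ) : Fin (n+1) → ℂ := fun i => if (i : ℕ) = 0 then 1 else 0


/-- `G_r` acts freely on `{ A(x) : det D(A(x); c) ≠ 0 }`. -/
theorem stmt4 (n : ℕ)
    (A : Matrix (Fin (n+2)) (Fin (n+2)) (Polynomial ℂ)) (c : ℂ)
    (hD : (Dc n A c).det ≠ 0)
    (g : Matrix (Fin (n+2)) (Fin (n+2)) (Polynomial ℂ)) (hg : Gr n g)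
    (hfix : g⁻¹ * A * g = A) :
    g = 1 := by
  obtain ⟨hg00, hgl, -, -, hgdet⟩ := hg
  simp only [Dc, Dmat] at hD
  unfold blkT blkU at hD
  have hAg : A * g = g * A := by
    calc A * g = (g * g⁻¹) * A * g := by rw [Matrix.mul_nonsing_inv g hgdet, Matrix.one_mul]
      _ = g * (g⁻¹ * A * g) := by simp only [Matrix.mul_assoc]
      _ = g * A := by rw [hfix]
  set u : Fin (n+1) → Polynomial ℂ := fun i => A i.succ 0 with hu
  set T : Matrix (Fin (n+1)) (Fin (n+1)) (Polynomial ℂ) := Matrix.of fun i j => A i.succ j.succ with hT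
  set B : Matrix (Fin (n+1)) (Fin (n+1)) (Polynomial ℂ) := Matrix.of fun i j => g i.succ j.succ with hB
  set s : Fin (n+1) → Polynomial ℂ := fun j => g 0 j.succ with hs
  set w : Fin (n+1) → Polynomial ℂ := fun j => A 0 j.succ with hw
  set v : Polynomial ℂ := A 0 0 with hv
  set D : Matrix (Fin (n+1)) (Fin (n+1)) (Polynomial ℂ) :=
    Matrix.of fun i j => ((T ^ (j : ℕ)) *ᵥ u) i with hDdef
  have key : ∀ i k, ∑ j, A i j * g j k = ∑ j, g i j * A j k := by
    intro i k
    have h1 := congrFun (congrFun hAg i) k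
    rwa [Matrix.mul_apply, Matrix.mul_apply] at h1
  -- relation 1 : s ⬝ᵥ u = 0
  have rel1 : s ⬝ᵥ u = 0 := by
    have h := key 0 0
    rw [Fin.sum_univ_succ, Fin.sum_univ_succ (f := fun j => g 0 j * A j 0)] at h
    simp only [hg00, hgl, one_mul, mul_one, mul_zero, Finset.sum_const_zero, add_zero] at h
    simpa [dotProduct, hs, hu, eq_comm] using h.symm
  -- relation 2 : B *ᵥ u = u
  have rel2 : B *ᵥ u = u := by
    funext i
    have h := key i.succ 0
    rw [Fin.sum_univ_succ, Fin.sum_univ_succ (f := fun j => g i.succ j * A j 0)] at h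
    simp only [hg00, hgl, one_mul, mul_one, mul_zero, zero_mul, Finset.sum_const_zero,
      add_zero, zero_add] at h
    simpa [Matrix.mulVec, dotProduct, hB, hu, eq_comm] using h
  -- relation 3 : B * T = T * B + outer u s
  have rel3 : ∀ i j, (B * T) i j = (T * B) i j + u i * s j := by
    intro i j
    have h := key i.succ j.succ
    rw [Fin.sum_univ_succ, Fin.sum_univ_succ (f := fun k => g i.succ k * A k j.succ)] at h
    simp only [hgl, zero_mul, zero_add] at h
    rw [Matrix.mul_apply, Matrix.mul_apply]
    simp only [hB, hT, hu, hs, Matrix.of_apply]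
    rw [← h]; ring
  -- relation 4 : s ᵥ* T = v • s + w ᵥ* B - w
  have rel4 : ∀ j, (s ᵥ* T) j = v * s j + (w ᵥ* B) j - w j := by
    intro j
    have h := key 0 j.succ
    rw [Fin.sum_univ_succ, Fin.sum_univ_succ (f := fun k => g 0 k * A k j.succ)] at h
    simp only [hg00, one_mul] at h
    rw [Matrix.vecMul, Matrix.vecMul]
    simp only [dotProduct, hB, hT, hu, hs, hw, hv, Matrix.of_apply]
    rw [h]; ring
  -- main induction
  have main : ∀ k : ℕ, s ⬝ᵥ ((T ^ k) *ᵥ u) = 0 ∧ B *ᵥ ((T ^ k) *ᵥ u) = (T ^ k) *ᵥ u := by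
    intro k
    induction k with
    | zero => simpa using ⟨rel1, rel2⟩
    | succ k ih =>
      have hT1 : (T ^ (k+1)) *ᵥ u = T *ᵥ ((T ^ k) *ᵥ u) := by
        rw [Matrix.mulVec_mulVec, ← pow_succ']
      constructor
      · rw [hT1, Matrix.dotProduct_mulVec]
        have hrow : s ᵥ* T = v • s + w ᵥ* B - w := by
          funext j
          simp only [Pi.sub_apply, Pi.add_apply, Pi.smul_apply, smul_eq_mul]
          rw [rel4 j]
        rw [hrow, sub_dotProduct, add_dotProduct, smul_dotProduct,
          ih.1, ← Matrix.dotProduct_mulVec, ih.2]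
        simp
      · rw [hT1, Matrix.mulVec_mulVec]
        have houter : ∀ x : Fin (n+1) → Polynomial ℂ,
            (B * T) *ᵥ x = (T * B) *ᵥ x + (s ⬝ᵥ x) • u := by
          intro x
          funext i
          simp only [Matrix.mulVec, dotProduct, Pi.add_apply, Pi.smul_apply,
            smul_eq_mul, Finset.sum_mul, Finset.mul_sum, ← Finset.sum_add_distrib]
          apply Finset.sum_congr rfl
          intro j _
          rw [rel3 i j]; ring
        rw [houter, ih.1, zero_smul, add_zero, ← Matrix.mulVec_mulVec, ih.2,
          Matrix.mulVec_mulVec, ← pow_succ']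
  -- det D ≠ 0
  have hdet : D.det ≠ 0 := by
    intro h
    apply hD
    have h5 : (D.map (eval c)).det = eval c D.det := (RingHom.map_det (evalRingHom c) D).symm
    rw [h5, h, eval_zero]
  -- s ᵥ* D = 0 and B * D = D
  have hsD : s ᵥ* D = 0 := by
    funext j
    have := (main j).1
    simpa [Matrix.vecMul, dotProduct, hDdef] using this
  have hBD : B * D = D := by
    funext i j
    have := congrFun (main j).2 i
    simpa [Matrix.mul_apply, Matrix.mulVec, dotProduct, hDdef] using this
  -- conclude s = 0
  have hs0 : s = 0 := by
    have h1 : s ᵥ* (D * D.adjugate) = 0 := by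
      rw [← Matrix.vecMul_vecMul, hsD, Matrix.zero_vecMul]
    rw [Matrix.mul_adjugate] at h1
    funext j
    have h2 := congrFun h1 j
    simp only [Matrix.vecMul, dotProduct, Matrix.smul_apply, Matrix.one_apply,
      smul_eq_mul, mul_ite, mul_one, mul_zero, Finset.sum_ite_eq', Finset.mem_univ,
      if_true, Pi.zero_apply] at h2
    rcases mul_eq_zero.mp h2 with h | h
    · exact h
    · exact absurd h hdet
  -- conclude B = 1
  have hB1 : B = 1 := by
    have h1 : (B - 1) * (D * D.adjugate) = 0 := by
      rw [← Matrix.mul_assoc, Matrix.sub_mul, hBD, Matrix.one_mul, sub_self,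
        Matrix.zero_mul]
    rw [Matrix.mul_adjugate, Matrix.mul_smul, Matrix.mul_one] at h1
    have h2 : B - 1 = 0 := by
      funext i j
      have h3 := congrFun (congrFun h1 i) j
      simp only [Matrix.smul_apply, smul_eq_mul, Matrix.zero_apply] at h3
      rcases mul_eq_zero.mp h3 with h | h
      · exact absurd h hdet
      · exact h
    rwa [sub_eq_zero] at h2
  -- finish
  funext i k
  refine Fin.cases ?_ (fun i => ?_) i <;> refine Fin.cases ?_ (fun j => ?_) k
  · simp [hg00, Matrix.one_apply]
  · have : s j = 0 := congrFun hs0 j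
    simp only [hs] at this
    rw [this, Matrix.one_apply_ne (Fin.succ_ne_zero j).symm]
  · rw [hgl i, Matrix.one_apply_ne (Fin.succ_ne_zero i)]
  · have : B i j = (1 : Matrix (Fin (n+1)) (Fin (n+1)) (Polynomial ℂ)) i j := by rw [hB1]
    simp only [hB, Matrix.of_apply, Matrix.one_apply] at this ⊢
    rw [this]
    simp [Fin.succ_inj]
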